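/- Let g(K) = K(1 − GK)/(C₀ + aK + bK²) with G, C₀, a, b > 0, defined on (0, 1/G). Then g is strictly quasi-concave on (0, 1/G): it is strictly increasing on (0, K⋆) and strictly decreasing on (K⋆, 1/G), where K⋆ = (√((GC₀)² + C₀b + C₀Ga) − GC₀)/(b + Ga). -/

import Mathlib

/-- g(K) = K(1 − GK)/(C₀ + aK + bK²) is strictly unimodal on (0, 1/G):
increasing up to K⋆ and decreasing after. -/
theorem ee_unimodal_in_K
    (G C₀ a b : ℝ) (hG : 0 < G) (hC₀ : 0 < C₀) (ha : 0 < a) (hb : 0 < b)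
    (Kstar : ℝ)
    (hKstar : Kstar = (Real.sqrt ((G * C₀) ^ 2 + C₀ * b + C₀ * G * a) - G * C₀)
        / (b + G * a)) :
    StrictMonoOn (fun K : ℝ => K * (1 - G * K) / (C₀ + a * K + b * K ^ 2))
      (Set.Ioc 0 Kstar) ∧
    StrictAntiOn (fun K : ℝ => K * (1 - G * K) / (C₀ + a * K + b * K ^ 2))
      (Set.Ico Kstar (1 / G)) := by
  have harg : (0:ℝ) ≤ (G * C₀) ^ 2 + C₀ * b + C₀ * G * a := by positivity
  have hs2 : Real.sqrt ((G * C₀) ^ 2 + C₀ * b + C₀ * G * a) ^ 2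
      = (G * C₀) ^ 2 + C₀ * b + C₀ * G * a := Real.sq_sqrt harg
  have hsnn : 0 ≤ Real.sqrt ((G * C₀) ^ 2 + C₀ * b + C₀ * G * a) :=
    Real.sqrt_nonneg _
  have hc : 0 < b + G * a := by positivity
  have hKc : Kstar * (b + G * a)
      = Real.sqrt ((G * C₀) ^ 2 + C₀ * b + C₀ * G * a) - G * C₀ := by
    rw [hKstar]; field_simp
  have hId : (b + G * a) * Kstar ^ 2 + 2 * G * C₀ * Kstar = C₀ := by
    nlinarith [hs2, hKc, hc]
  have hspos : G * C₀ < Real.sqrt ((G * C₀) ^ 2 + C₀ * b + C₀ * G * a) := by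
    nlinarith [hs2, hsnn, mul_pos hG hC₀, mul_pos hC₀ hb, mul_pos (mul_pos hC₀ hG) ha]
  have hKpos : 0 < Kstar := by nlinarith [hKc, hc]
  have hder : ∀ x : ℝ, 0 < x →
      HasDerivAt (fun K : ℝ => K * (1 - G * K) / (C₀ + a * K + b * K ^ 2))
        ((C₀ - 2 * G * C₀ * x - (b + G * a) * x ^ 2) / (C₀ + a * x + b * x ^ 2) ^ 2) x := by
    intro x hx
    have hd : 0 < C₀ + a * x + b * x ^ 2 := by positivity
    have h1 : HasDerivAt (fun K : ℝ => K * (1 - G * K)) (1 - 2 * G * x) x := by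
      have := (hasDerivAt_id x).mul
        ((hasDerivAt_const x (1:ℝ)).sub ((hasDerivAt_id x).const_mul G))
      refine this.congr_deriv ?_
      simp [id]; ring
    have h2 : HasDerivAt (fun K : ℝ => C₀ + a * K + b * K ^ 2) (a + 2 * b * x) x := by
      have := (((hasDerivAt_id x).const_mul a).const_add C₀).add
        ((hasDerivAt_pow 2 x).const_mul b)
      refine this.congr_deriv ?_
      simp [id]; ring
    have h3 := h1.div h2 (ne_of_gt hd)
    refine h3.congr_deriv ?_
    field_simp
    ring
  constructor
  · apply strictMonoOn_of_deriv_pos (convex_Ioc 0 Kstar)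
    · intro x hx
      exact (hder x hx.1).continuousAt.continuousWithinAt
    · intro x hx
      rw [interior_Ioc] at hx
      rw [(hder x hx.1).deriv]
      apply div_pos
      · have h1 : 0 < Kstar - x := sub_pos.2 hx.2
        have h2 : 0 < (b + G * a) * (Kstar + x) + 2 * G * C₀ := by
          nlinarith [mul_pos hc (add_pos hKpos hx.1), mul_pos hG hC₀]
        nlinarith [mul_pos h1 h2, hId]
      · have hd : 0 < C₀ + a * x + b * x ^ 2 := by
          nlinarith [mul_pos ha hx.1, mul_pos hb (pow_pos hx.1 2)]
        exact pow_pos hd 2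
  · apply strictAntiOn_of_deriv_neg (convex_Ico Kstar (1 / G))
    · intro x hx
      exact (hder x (lt_of_lt_of_le hKpos hx.1)).continuousAt.continuousWithinAt
    · intro x hx
      rw [interior_Ico] at hx
      have hxpos : 0 < x := lt_trans hKpos hx.1
      rw [(hder x hxpos).deriv]
      apply div_neg_of_neg_of_pos
      · have h1 : 0 < x - Kstar := sub_pos.2 hx.1
        have h2 : 0 < (b + G * a) * (Kstar + x) + 2 * G * C₀ := by
          nlinarith [mul_pos hc (add_pos hKpos hxpos), mul_pos hG hC₀]
        nlinarith [mul_pos h1 h2, hId]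
      · have hd : 0 < C₀ + a * x + b * x ^ 2 := by
          nlinarith [mul_pos ha hxpos, mul_pos hb (pow_pos hxpos 2)]
        exact pow_pos hd 2
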